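/- Let X be a completely regular (Tychonoff) P-space, i.e., every point x ∈ X satisfies x ∉ closure(A) for every F_σ-set A ⊆ X \ {x}. Then every countable subset A of X is strongly functionally discrete in X, and consequently there exists a linear continuous mapping φ : C_p*(A) → C_p(X) with φ(y)|_A = y for every y ∈ C_p*(A). -/

import Mathlib

open Set Topology

/-- `C_p(X)`: the continuous real-valued functions on `X`, topologized by pointwise
convergence (i.e. as a subspace of `X → ℝ` with the product topology). -/
abbrev Cp (X : Type*) [TopologicalSpace X] : Type _ := {f : X → ℝ // Continuous f}

/-- `C_p*(X)`: the bounded continuous real-valued functions on `X`, topologized by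
pointwise convergence. -/
abbrev CpStar (X : Type*) [TopologicalSpace X] : Type _ :=
  {f : X → ℝ // Continuous f ∧ ∃ M : ℝ, ∀ x, |f x| ≤ M}

/-- A set is functionally open (a cozero set) if it is the cozero set of a
continuous real-valued function. -/
def FunctionallyOpen {X : Type*} [TopologicalSpace X] (U : Set X) : Prop :=
  ∃ f : X → ℝ, Continuous f ∧ U = f ⁻¹' ({0}ᶜ)

/-- A subset `A` is strongly functionally discrete in `X` if there is a family of
functionally open sets `G a ∋ a` (for `a ∈ A`) which is discrete in `X`: every point
of `X` has a neighborhood meeting `G a` for at most one `a ∈ A`. -/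
def StronglyFunctionallyDiscrete {X : Type*} [TopologicalSpace X] (A : Set X) : Prop :=
  ∃ G : A → Set X,
    (∀ a : A, (a : X) ∈ G a) ∧
    (∀ a : A, FunctionallyOpen (G a)) ∧
    (∀ x : X, ∃ V ∈ 𝓝 x, {a : A | (V ∩ G a).Nonempty}.Subsingleton)

section Aux

variable {X : Type*} [TopologicalSpace X]

/-- In a P-space, countable unions of closed sets are closed. -/
lemma pUnionClosed
    (hP : ∀ (x : X) (F : ℕ → Set X), (∀ n, IsClosed (F n)) →
      x ∉ (⋃ n, F n) → x ∉ closure (⋃ n, F n))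
    {ι : Type*} [Countable ι] (F : ι → Set X) (hF : ∀ i, IsClosed (F i)) :
    IsClosed (⋃ i, F i) := by
  rcases isEmpty_or_nonempty ι with h | h
  · simp only [iUnion_of_empty]; exact isClosed_empty
  · obtain ⟨f, hf⟩ := exists_surjective_nat ι
    have he : (⋃ n, F (f n)) = ⋃ i, F i := hf.iUnion_comp F
    rw [← he]
    refine isClosed_of_closure_subset fun x hx => ?_
    by_contra hxU
    exact hP x (fun n => F (f n)) (fun n => hF (f n)) hxU hx

/-- In a P-space, cozero sets are closed. -/
lemma pCozeroClosed
    (hP : ∀ (x : X) (F : ℕ → Set X), (∀ n, IsClosed (F n)) →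
      x ∉ (⋃ n, F n) → x ∉ closure (⋃ n, F n))
    {f : X → ℝ} (hf : Continuous f) : IsClosed (f ⁻¹' ({0}ᶜ)) := by
  have he : f ⁻¹' ({0}ᶜ) = ⋃ n : ℕ, {x | 1/((n:ℝ)+1) ≤ |f x|} := by
    ext x
    simp only [mem_preimage, mem_compl_iff, mem_singleton_iff, mem_iUnion, mem_setOf_eq]
    constructor
    · intro h
      obtain ⟨n, hn⟩ := exists_nat_one_div_lt (abs_pos.mpr h)
      exact ⟨n, hn.le⟩
    · rintro ⟨n, hn⟩ h0
      rw [h0, abs_zero] at hn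
      have h1 : (0:ℝ) < 1/((n:ℝ)+1) := by positivity
      linarith
  rw [he]
  exact pUnionClosed hP _ fun n => isClosed_le continuous_const (continuous_abs.comp hf)

end Aux

/-- If `X` is a completely regular (Tychonoff) `P`-space, then every countable
`A ⊆ X` is strongly functionally discrete in `X`, and consequently there is a linear
continuous extender `φ : C_p*(A) → C_p(X)`. -/
theorem stmt_12 {X : Type*} [TopologicalSpace X] [T35Space X]
    (hP : ∀ (x : X) (F : ℕ → Set X), (∀ n, IsClosed (F n)) →
      x ∉ (⋃ n, F n) → x ∉ closure (⋃ n, F n)) :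
    ∀ A : Set X, A.Countable →
      StronglyFunctionallyDiscrete A ∧
      ∃ φ : CpStar A → Cp X, Continuous φ ∧
        (∀ (c d : ℝ) (y z w : CpStar A), (∀ a : A, w.1 a = c * y.1 a + d * z.1 a) →
          ∀ x : X, (φ w).1 x = c * (φ y).1 x + d * (φ z).1 x) ∧
        (∀ y : CpStar A, ∀ a : A, (φ y).1 a = y.1 a) := by
  classical
  intro A hA
  haveI : Countable A := hA.to_subtype
  -- an injection of A into ℕ
  obtain ⟨ι, hι⟩ := exists_injective_nat A
  -- any subset of A (viewed in X) is closed
  have hsubclosed : ∀ B : Set X, B ⊆ A → IsClosed B := by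
    intro B hB
    have hBc : Countable B := ((hA.mono hB)).to_subtype
    have : B = ⋃ b : B, {(b : X)} := by simp
    rw [this]
    exact pUnionClosed hP _ fun b => isClosed_singleton
  -- separating functions
  have key : ∀ a : A, ∃ f : X → ℝ, Continuous f ∧ f a = 0 ∧
      (∀ b : A, b ≠ a → f b = 1) := by
    intro a
    have hclosed : IsClosed (A \ {(a : X)}) := hsubclosed _ diff_subset
    have hnotin : (a : X) ∉ A \ {(a : X)} := fun h => h.2 rfl
    obtain ⟨f, hf, hf0, hf1⟩ :=
      CompletelyRegularSpace.completely_regular (a : X) _ hclosed hnotin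
    refine ⟨fun x => (f x : ℝ), continuous_subtype_val.comp hf, by simp [hf0], ?_⟩
    intro b hb
    have hbmem : (b : X) ∈ A \ {(a : X)} :=
      ⟨b.2, fun h => hb (Subtype.ext h)⟩
    have := hf1 hbmem
    simp [this]
  choose F hFc hF0 hF1 using key
  -- the finite "earlier" sets
  have hfin : ∀ a : A, {b : A | ι b < ι a}.Finite := by
    intro a
    have : {b : A | ι b < ι a} = ι ⁻¹' (Iio (ι a)) := rfl
    rw [this]
    exact Set.Finite.preimage (hι.injOn) (finite_Iio _)
  -- the cozero witnesses
  set g : A → X → ℝ := fun a x =>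
    max (1/2 - F a x) 0 * ∏ b ∈ (hfin a).toFinset, max (F b x - 1/2) 0 with hg
  have hgc : ∀ a : A, Continuous (g a) := by
    intro a
    exact ((continuous_const.sub (hFc a)).max continuous_const).mul
      (continuous_finset_prod _ fun b _ => ((hFc b).sub continuous_const).max continuous_const)
  -- the sets G
  set G : A → Set X := fun a => (g a) ⁻¹' ({0}ᶜ) with hGdef
  have hGiff : ∀ a : A, ∀ x : X,
      x ∈ G a ↔ (F a x < 1/2 ∧ ∀ b : A, ι b < ι a → 1/2 < F b x) := by
    intro a x
    have hmax : ∀ t : ℝ, max t 0 ≠ 0 ↔ 0 < t := by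
      intro t
      rcases le_or_gt t 0 with h | h
      · simp [max_eq_right h]; linarith
      · simp [max_eq_left h.le]
        exact h.le
    simp only [hGdef, mem_preimage, mem_compl_iff, mem_singleton_iff, hg]
    rw [← ne_eq, mul_ne_zero_iff, Finset.prod_ne_zero_iff]
    constructor
    · rintro ⟨h1, h2⟩
      refine ⟨by have := (hmax _).1 h1; linarith, fun b hb => ?_⟩
      have hbmem : b ∈ (hfin a).toFinset := (hfin a).mem_toFinset.2 hb
      have := (hmax _).1 (h2 b hbmem)
      linarith
    · rintro ⟨h1, h2⟩
      refine ⟨(hmax _).2 (by linarith), fun b hb => ?_⟩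
      have := h2 b ((hfin a).mem_toFinset.1 hb)
      exact (hmax _).2 (by linarith)
  have hmemG : ∀ a : A, (a : X) ∈ G a := by
    intro a
    rw [hGiff]
    refine ⟨by rw [hF0]; norm_num, fun b hb => ?_⟩
    have hne : a ≠ b := by intro h; subst h; exact lt_irrefl _ hb
    rw [hF1 b a hne]; norm_num
  have hGopen : ∀ a : A, IsOpen (G a) :=
    fun a => (isOpen_compl_singleton).preimage (hgc a)
  have hGclosed : ∀ a : A, IsClosed (G a) := fun a => pCozeroClosed hP (hgc a)
  have hGdisj : ∀ a b : A, a ≠ b → ∀ x : X, x ∈ G a → x ∈ G b → False := by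
    intro a b hab x hxa hxb
    rcases lt_trichotomy (ι a) (ι b) with h | h | h
    · have h1 := ((hGiff a x).1 hxa).1
      have h2 := ((hGiff b x).1 hxb).2 a h
      linarith
    · exact hab (hι h)
    · have h1 := ((hGiff b x).1 hxb).1
      have h2 := ((hGiff a x).1 hxa).2 b h
      linarith
  have hUclosed : IsClosed (⋃ a : A, G a) := pUnionClosed hP _ hGclosed
  -- strong functional discreteness
  have hSFD : StronglyFunctionallyDiscrete A := by
    refine ⟨G, hmemG, fun a => ⟨g a, hgc a, rfl⟩, fun x => ?_⟩
    by_cases hx : ∃ a : A, x ∈ G a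
    · obtain ⟨a, ha⟩ := hx
      refine ⟨G a, (hGopen a).mem_nhds ha, ?_⟩
      rintro b ⟨z, hz1, hz2⟩ c ⟨w, hw1, hw2⟩
      have hb : b = a := by
        by_contra h; exact hGdisj b a h z hz2 hz1
      have hc : c = a := by
        by_contra h; exact hGdisj c a h w hw2 hw1
      rw [hb, hc]
    · refine ⟨(⋃ a : A, G a)ᶜ, hUclosed.isOpen_compl.mem_nhds ?_, ?_⟩
      · intro h
        obtain ⟨a, ha⟩ := mem_iUnion.1 h
        exact hx ⟨a, ha⟩
      · rintro b ⟨z, hz1, hz2⟩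
        exact absurd (mem_iUnion.2 ⟨b, hz2⟩) hz1
  -- the extender
  set φfun : CpStar A → X → ℝ := fun y x =>
    if h : ∃ a : A, x ∈ G a then y.1 h.choose else 0 with hφfun
  have hchoose : ∀ (x : X) (h : ∃ a : A, x ∈ G a) (a : A), x ∈ G a → h.choose = a := by
    intro x h a ha
    by_contra hne
    exact hGdisj _ _ hne x h.choose_spec ha
  have hval : ∀ (y : CpStar A) (a : A) (x : X), x ∈ G a → φfun y x = y.1 a := by
    intro y a x hx
    have h : ∃ b : A, x ∈ G b := ⟨a, hx⟩
    simp only [hφfun, dif_pos h, hchoose x h a hx]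
  have hval0 : ∀ (y : CpStar A) (x : X), (¬ ∃ a : A, x ∈ G a) → φfun y x = 0 := by
    intro y x hx
    simp only [hφfun, dif_neg hx]
  have hcont : ∀ y : CpStar A, Continuous (φfun y) := by
    intro y
    refine IsLocallyConstant.continuous ?_
    rw [IsLocallyConstant.iff_exists_open]
    intro x
    by_cases hx : ∃ a : A, x ∈ G a
    · obtain ⟨a, ha⟩ := hx
      refine ⟨G a, hGopen a, ha, fun x' hx' => ?_⟩
      rw [hval y a x' hx', hval y a x ha]
    · refine ⟨(⋃ a : A, G a)ᶜ, hUclosed.isOpen_compl, ?_, ?_⟩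
      · intro h
        obtain ⟨a, ha⟩ := mem_iUnion.1 h
        exact hx ⟨a, ha⟩
      · intro x' hx'
        have hx'' : ¬ ∃ a : A, x' ∈ G a := by
          rintro ⟨a, ha⟩
          exact hx' (mem_iUnion.2 ⟨a, ha⟩)
        rw [hval0 y x' hx'', hval0 y x hx]
  refine ⟨hSFD, fun y => ⟨φfun y, hcont y⟩, ?_, ?_, ?_⟩
  · -- continuity of φ
    refine Continuous.subtype_mk (continuous_pi fun x => ?_) _
    by_cases hx : ∃ a : A, x ∈ G a
    · simp only [hφfun, dif_pos hx]
      exact (continuous_apply _).comp continuous_subtype_val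
    · simp only [hφfun, dif_neg hx]
      exact continuous_const
  · -- linearity
    intro c d y z w hw x
    show φfun w x = c * φfun y x + d * φfun z x
    by_cases hx : ∃ a : A, x ∈ G a
    · obtain ⟨a, ha⟩ := hx
      rw [hval w a x ha, hval y a x ha, hval z a x ha]
      exact hw a
    · rw [hval0 w x hx, hval0 y x hx, hval0 z x hx]
      ring
  · -- extension property
    intro y a
    show φfun y a = y.1 a
    exact hval y a a (hmemG a)
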